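/- Generalized Fjørtoft theorem: suppose v is a nonzero C² complex solution on [a,b] of v'' - (G''/(G - σ)) v = α² v with v(a) = v(b) = 0, where G = k₁U + k₃W is real C², σ = σ_r + iσ_i with σ_i ≠ 0, and (α, and hence ∫(|v'|²+α²|v|²)) is positive. Let y* ∈ (a,b) be a point with G''(y*) = 0 provided by the generalized Rayleigh theorem. Then there exists y₀ ∈ (a,b) such that G''(y₀)·(G(y₀) - G(y*)) < 0. -/

import Mathlib

open Set MeasureTheory intervalIntegral Complex

theorem generalized_fjortoft (a b : ℝ) (hab : a < b)
    (G : ℝ → ℝ) (hG : ContDiffOn ℝ 2 G (Icc a b)) (α : ℝ) (hα : α ≠ 0) (σ : ℂ)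
    (hσ : σ.im ≠ 0)
    (v : ℝ → ℂ) (hv : ContDiffOn ℝ 2 v (Icc a b))
    (hvne : ∃ y ∈ Icc a b, v y ≠ 0)
    (hva : v a = 0) (hvb : v b = 0)
    (heq : ∀ y ∈ Icc a b,
      deriv (deriv v) y =
        (((deriv (deriv G) y : ℝ) : ℂ) / (((G y : ℝ) : ℂ) - σ) + ((α ^ 2 : ℝ) : ℂ)) * v y)
    (y' : ℝ) (hy' : y' ∈ Ioo a b) (hG'' : deriv (deriv G) y' = 0) :
    ∃ y₀ ∈ Ioo a b, deriv (deriv G) y₀ * (G y₀ - G y') < 0 := by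
  have hs : UniqueDiffOn ℝ (Icc a b) := uniqueDiffOn_Icc hab
  set dv : ℝ → ℂ := derivWithin v (Icc a b) with hdvdef
  set dG : ℝ → ℝ := derivWithin G (Icc a b) with hdGdef
  set G2 : ℝ → ℝ := derivWithin dG (Icc a b) with hG2def
  -- continuity
  have hvC : ContinuousOn v (Icc a b) := hv.continuousOn
  have hdvC : ContinuousOn dv (Icc a b) :=
    (hv.derivWithin (m := 1) hs (by norm_num)).continuousOn
  have hGC : ContinuousOn G (Icc a b) := hG.continuousOn
  have hdG1 : ContDiffOn ℝ 1 dG (Icc a b) := hG.derivWithin (m := 1) hs (by norm_num)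
  have hG2C : ContinuousOn G2 (Icc a b) := (hdG1.derivWithin (m := 0) hs (by norm_num)).continuousOn
  -- agreement on the interior
  have hdv_eq : ∀ x ∈ Ioo a b, dv x = deriv v x := fun x hx =>
    derivWithin_of_mem_nhds (Icc_mem_nhds hx.1 hx.2)
  have hG2_eq : ∀ x ∈ Ioo a b, G2 x = deriv (deriv G) x := by
    intro x hx
    have h1 : dG =ᶠ[nhds x] deriv G := by
      filter_upwards [Ioo_mem_nhds hx.1 hx.2] with z hz using
        derivWithin_of_mem_nhds (Icc_mem_nhds hz.1 hz.2)
    rw [hG2def, derivWithin_of_mem_nhds (Icc_mem_nhds hx.1 hx.2), h1.deriv_eq]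
  -- derivative facts
  have hvd : ∀ x ∈ Ioo a b, HasDerivAt v (dv x) x := by
    intro x hx
    have h := (hv.differentiableOn (by norm_num)).differentiableAt (Icc_mem_nhds hx.1 hx.2)
    rw [hdv_eq x hx]
    exact h.hasDerivAt
  have hdvd : ∀ x ∈ Ioo a b,
      HasDerivAt dv ((((G2 x : ℝ) : ℂ) / (((G x : ℝ) : ℂ) - σ) + ((α ^ 2 : ℝ) : ℂ)) * v x) x := by
    intro x hx
    have hd1 : ContDiffOn ℝ 1 dv (Icc a b) := hv.derivWithin (m := 1) hs (by norm_num)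
    have h2 := (hd1.differentiableOn (by norm_num)).differentiableAt (Icc_mem_nhds hx.1 hx.2)
    have h3 : deriv dv x = deriv (deriv v) x := by
      have h4 : dv =ᶠ[nhds x] deriv v := by
        filter_upwards [Ioo_mem_nhds hx.1 hx.2] with z hz using hdv_eq z hz
      exact h4.deriv_eq
    have h5 := h2.hasDerivAt
    rw [h3, heq x (Ioo_subset_Icc_self hx), ← hG2_eq x hx] at h5
    exact h5
  -- positivity of the denominator
  set N : ℝ → ℝ := fun y => normSq (((G y : ℝ) : ℂ) - σ) with hNdef
  have hNpos : ∀ y, 0 < N y := by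
    intro y
    apply normSq_pos.mpr
    intro h
    apply hσ
    have := congrArg Complex.im h
    simpa using this.symm
  set q : ℝ → ℝ := fun y => normSq (v y) with hqdef
  set f' : ℝ → ℂ := fun y =>
    ((normSq (dv y) : ℝ) : ℂ) +
      ((((G2 y : ℝ) : ℂ) / (((G y : ℝ) : ℂ) - σ) + ((α ^ 2 : ℝ) : ℂ)) * ((q y : ℝ) : ℂ))
    with hf'def
  have hNe : ∀ y : ℝ, (((G y : ℝ) : ℂ) - σ) ≠ 0 := by
    intro y
    exact normSq_pos.mp (hNpos y)
  have huIcc : uIcc a b = Icc a b := uIcc_of_le hab.le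
  have hqC : ContinuousOn q (Icc a b) := continuous_normSq.comp_continuousOn hvC
  have hNC : ContinuousOn N (Icc a b) :=
    continuous_normSq.comp_continuousOn ((continuous_ofReal.comp_continuousOn hGC).sub continuousOn_const)
  have hf'C : ContinuousOn f' (Icc a b) := by
    apply ContinuousOn.add
    · exact continuous_ofReal.comp_continuousOn (continuous_normSq.comp_continuousOn hdvC)
    · apply ContinuousOn.mul
      · apply ContinuousOn.add
        · exact ContinuousOn.div (continuous_ofReal.comp_continuousOn hG2C)
            ((continuous_ofReal.comp_continuousOn hGC).sub continuousOn_const)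
            (fun y _ => hNe y)
        · exact continuousOn_const
      · exact continuous_ofReal.comp_continuousOn hqC
  have hf'I : IntervalIntegrable f' volume a b :=
    (hf'C.mono (by rw [huIcc])).intervalIntegrable
  have key : (∫ y in a..b, f' y) = 0 := by
    have hF : ∀ x ∈ Ioo a b,
        HasDerivAt (fun y => (starRingEnd ℂ) (v y) * dv y) (f' x) x := by
      intro x hx
      have h := ((hvd x hx).star).mul (hdvd x hx)
      have e : (starRingEnd ℂ) (dv x) * dv x
            + (starRingEnd ℂ) (v x) * ((((G2 x : ℝ) : ℂ) / (((G x : ℝ) : ℂ) - σ) + ((α ^ 2 : ℝ) : ℂ)) * v x)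
            = f' x := by
        simp only [hf'def]
        have e1 : ((normSq (dv x) : ℝ) : ℂ) = (starRingEnd ℂ) (dv x) * dv x :=
          normSq_eq_conj_mul_self
        have e2 : ((q x : ℝ) : ℂ) = (starRingEnd ℂ) (v x) * v x := normSq_eq_conj_mul_self
        rw [e1, e2]
        ring
      rw [← e]
      simpa [Complex.star_def, Pi.mul_def] using h
    have := integral_eq_sub_of_hasDerivAt_of_le hab.le
      ((Complex.continuous_conj.comp_continuousOn hvC).mul hdvC) hF hf'I
    rw [this]
    simp [hva, hvb]
  -- imaginary part
  have him : ∀ y, (f' y).im = σ.im * (G2 y * q y / N y) := by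
    intro y
    simp only [hf'def, hNdef, hqdef]
    simp [pow_two, Complex.add_im, Complex.mul_im, Complex.div_im, Complex.ofReal_re,
      Complex.ofReal_im, Complex.sub_re, Complex.sub_im]
    ring
  have hre : ∀ y, (f' y).re =
      (normSq (dv y) + α ^ 2 * q y) + G2 y * (G y - σ.re) * q y / N y := by
    intro y
    simp only [hf'def, hNdef, hqdef]
    simp [pow_two, Complex.add_re, Complex.mul_re, Complex.div_re, Complex.ofReal_re,
      Complex.ofReal_im, Complex.sub_re, Complex.sub_im]
    ring
  -- integrability of the real pieces
  have hIoo : Icc a b ⊆ Icc a b := subset_rfl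
  have h1C : ContinuousOn (fun y => normSq (dv y) + α ^ 2 * q y) (Icc a b) :=
    (continuous_normSq.comp_continuousOn hdvC).add (continuousOn_const.mul hqC)
  have h1I : IntervalIntegrable (fun y => normSq (dv y) + α ^ 2 * q y) volume a b :=
    (h1C.mono (by rw [huIcc])).intervalIntegrable
  have h2C : ContinuousOn (fun y => G2 y * (G y - σ.re) * q y / N y) (Icc a b) :=
    ((hG2C.mul (hGC.sub continuousOn_const)).mul hqC).div hNC (fun y _ => (hNpos y).ne')
  have h2I : IntervalIntegrable (fun y => G2 y * (G y - σ.re) * q y / N y) volume a b :=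
    (h2C.mono (by rw [huIcc])).intervalIntegrable
  have h3C : ContinuousOn (fun y => G2 y * q y / N y) (Icc a b) :=
    (hG2C.mul hqC).div hNC (fun y _ => (hNpos y).ne')
  have h3I : IntervalIntegrable (fun y => G2 y * q y / N y) volume a b :=
    (h3C.mono (by rw [huIcc])).intervalIntegrable
  have hqI : IntervalIntegrable q volume a b := (hqC.mono (by rw [huIcc])).intervalIntegrable
  -- the im identity
  have him0 : (∫ y in a..b, G2 y * q y / N y) = 0 := by
    have h1 : (∫ y in a..b, (f' y).im) = 0 := by
      have h := Complex.imCLM.intervalIntegral_comp_comm hf'I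
      simp only [Complex.imCLM_apply] at h
      rw [key] at h
      simpa using h
    have h2 : (∫ y in a..b, (f' y).im) = σ.im * ∫ y in a..b, G2 y * q y / N y := by
      simp_rw [him]
      exact intervalIntegral.integral_const_mul _ _
    rw [h2] at h1
    exact (mul_eq_zero.mp h1).resolve_left hσ
  -- the re identity
  have hre0 : (∫ y in a..b, (normSq (dv y) + α ^ 2 * q y)) +
      (∫ y in a..b, G2 y * (G y - σ.re) * q y / N y) = 0 := by
    have h1 : (∫ y in a..b, (f' y).re) = 0 := by
      have h := Complex.reCLM.intervalIntegral_comp_comm hf'I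
      simp only [Complex.reCLM_apply] at h
      rw [key] at h
      simpa using h
    rw [← h1]
    rw [← intervalIntegral.integral_add h1I h2I]
    exact (intervalIntegral.integral_congr (fun y _ => (hre y).symm))
  -- positivity of ∫ q
  have hqpos : 0 < ∫ y in a..b, q y := by
    obtain ⟨y0, hy0m, hvy0⟩ := hvne
    have hy0 : y0 ∈ Ioo a b := by
      rcases eq_or_lt_of_le hy0m.1 with h | h
      · exact absurd (h ▸ hva) hvy0
      rcases eq_or_lt_of_le hy0m.2 with h2 | h2
      · exact absurd (h2 ▸ hvb) hvy0
      exact ⟨h, h2⟩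
    by_contra hle
    push_neg at hle
    have hnn : ∀ u ∈ Icc a b, 0 ≤ q u := fun u _ => normSq_nonneg _
    have hge : 0 ≤ ∫ y in a..b, q y := intervalIntegral.integral_nonneg hab.le hnn
    have h0 : (∫ y in a..b, q y) = 0 := le_antisymm hle hge
    have hae : q =ᵐ[volume.restrict (Ioc a b)] 0 := by
      rw [intervalIntegral.integral_eq_zero_iff_of_le_of_nonneg_ae hab.le
        (Filter.Eventually.of_forall (fun u => normSq_nonneg _)) hqI] at h0
      exact h0
    -- q is positive on a neighborhood of y0
    have hqct : ContinuousAt q y0 :=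
      (hqC.continuousWithinAt (Ioo_subset_Icc_self hy0)).continuousAt (Icc_mem_nhds hy0.1 hy0.2)
    have hqy0 : q y0 ≠ 0 := fun h => hvy0 (normSq_eq_zero.mp h)
    have hev : ∀ᶠ x in nhds y0, q x ≠ 0 := hqct.eventually_ne hqy0
    have hev2 : ∀ᶠ x in nhds y0, x ∈ Ioo a b ∧ q x ≠ 0 :=
      (Filter.eventually_mem_set.mpr (Ioo_mem_nhds hy0.1 hy0.2)).and hev
    obtain ⟨ε, hε, hball⟩ := Metric.eventually_nhds_iff_ball.mp hev2
    have hsub : Metric.ball y0 ε ⊆ {x | q x ≠ 0} ∩ Ioc a b := by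
      intro x hx
      obtain ⟨h1, h2⟩ := hball x hx
      exact ⟨h2, ⟨h1.1, h1.2.le⟩⟩
    have hzero : volume.restrict (Ioc a b) {x | q x ≠ 0} = 0 := by
      have h := MeasureTheory.ae_iff.mp hae
      simpa using h
    have hzero2 : volume ({x | q x ≠ 0} ∩ Ioc a b) = 0 := by
      rw [← Measure.restrict_apply' measurableSet_Ioc]
      exact hzero
    have hb0 : volume (Metric.ball y0 ε) = 0 := measure_mono_null hsub hzero2
    exact absurd hb0 (Metric.measure_ball_pos volume y0 hε).ne'
  -- combine re identity with positivity
  have hα2 : (0:ℝ) < α ^ 2 := by positivity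
  have hkey2 : (∫ y in a..b, G2 y * (G y - σ.re) * q y / N y) < 0 := by
    have hge : α ^ 2 * (∫ y in a..b, q y) ≤ ∫ y in a..b, (normSq (dv y) + α ^ 2 * q y) := by
      rw [← intervalIntegral.integral_const_mul]
      apply intervalIntegral.integral_mono_on hab.le (hqI.const_mul _) h1I
      intro u hu
      have := normSq_nonneg (dv u)
      linarith
    have hpos : 0 < ∫ y in a..b, (normSq (dv y) + α ^ 2 * q y) :=
      lt_of_lt_of_le (mul_pos hα2 hqpos) hge
    linarith [hre0]
  have h3I' : IntervalIntegrable (fun y => (σ.re - G y') * (G2 y * q y / N y)) volume a b :=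
    h3I.const_mul _
  have hsplit : (∫ y in a..b, G2 y * (G y - G y') * q y / N y)
      = (∫ y in a..b, G2 y * (G y - σ.re) * q y / N y)
        + (σ.re - G y') * ∫ y in a..b, G2 y * q y / N y := by
    rw [← intervalIntegral.integral_const_mul, ← intervalIntegral.integral_add h2I h3I']
    apply intervalIntegral.integral_congr
    intro y _
    ring
  have hneg : (∫ y in a..b, G2 y * (G y - G y') * q y / N y) < 0 := by
    rw [hsplit, him0]
    simpa using hkey2
  by_contra hcon
  push_neg at hcon
  have hnn : ∀ u ∈ Icc a b, 0 ≤ G2 u * (G u - G y') * q u / N u := by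
    intro u hu
    rcases eq_or_lt_of_le hu.1 with h | h
    · rw [← h]
      simp [hqdef, hva]
    rcases eq_or_lt_of_le hu.2 with h2 | h2
    · rw [h2]
      simp [hqdef, hvb]
    · have hu2 : u ∈ Ioo a b := ⟨h, h2⟩
      have hge0 := hcon u hu2
      rw [hG2_eq u hu2]
      exact div_nonneg (mul_nonneg hge0 (normSq_nonneg _)) (hNpos u).le
  exact absurd (intervalIntegral.integral_nonneg hab.le hnn) (not_le.mpr hneg)
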